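/- Let A be an integral NDA, and let ρ¹ = ρ¹₀,…,ρ¹ₙ and ρ² = ρ²₀,…,ρ²ₙ be two runs of A of length n such that val(ρ¹) ≤ val(ρ²). Then for every 0 ≤ i ≤ n, it holds that Γ(ρ¹₀,…,ρ¹ᵢ) − Γ(ρ²₀,…,ρ²ᵢ) ≤ M. -/

import Mathlib

/-- A nondeterministic integral discounted-sum automaton (NDA) over alphabet `σ`
with state type `Q`. -/
structure NDA (σ : Type) (Q : Type) where
  init : Set Q
  acc : Set Q
  delta : Set (Q × σ × Q)
  val : Q × σ × Q → ℕ
  fval : Q → ℕ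
  lam : ℕ
  one_lt_lam : 1 < lam

namespace NDA

variable {σ Q : Type}

/-- The adjacency (transition) condition for a sequence of states along the word `w`. -/
def Steps (A : NDA σ Q) (w : List σ) (ρ : ℕ → Q) : Prop :=
  ∀ i : Fin w.length, (ρ (i : ℕ), w.get i, ρ ((i : ℕ) + 1)) ∈ A.delta

/-- A run of `A` on `w`: starts in an initial state and follows transitions. -/
def IsRun (A : NDA σ Q) (w : List σ) (ρ : ℕ → Q) : Prop :=
  ρ 0 ∈ A.init ∧ A.Steps w ρ

/-- A run of `A` on `w` starting in the state `q`. -/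
def IsRunFrom (A : NDA σ Q) (q : Q) (w : List σ) (ρ : ℕ → Q) : Prop :=
  ρ 0 = q ∧ A.Steps w ρ

/-- The discounted weight of the sequence of states `ρ` along the word `w`. -/
def runVal (A : NDA σ Q) (w : List σ) (ρ : ℕ → Q) : ℚ :=
  ∑ i : Fin w.length,
    ((A.lam : ℚ)⁻¹) ^ (i : ℕ) * (A.val (ρ (i : ℕ), w.get i, ρ ((i : ℕ) + 1)) : ℚ)

/-- `A_[P→P'](w)`: minimal weight of a run on `w` from `P` to `P'` (`⊤` if none). -/
noncomputable def minVal (A : NDA σ Q) (P P' : Set Q) (w : List σ) : EReal :=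
  sInf {x : EReal | ∃ ρ : ℕ → Q, ρ 0 ∈ P ∧ A.Steps w ρ ∧ ρ w.length ∈ P' ∧
    x = ((A.runVal w ρ : ℝ) : EReal)}

/-- `A_[P→_f P'](w)`: minimal weight including the final weight of an accepting
run on `w` from `P` ending in `P' ∩ α` (`⊤` if none). -/
noncomputable def minValF (A : NDA σ Q) (P P' : Set Q) (w : List σ) : EReal :=
  sInf {x : EReal | ∃ ρ : ℕ → Q, ρ 0 ∈ P ∧ A.Steps w ρ ∧ ρ w.length ∈ P' ∩ A.acc ∧
    x = (((A.runVal w ρ + ((A.lam : ℚ)⁻¹) ^ w.length * (A.fval (ρ w.length) : ℚ) : ℚ) : ℝ) : EReal)}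

/-- `A*(w)`: the value of the word `w`. -/
noncomputable def starVal (A : NDA σ Q) (w : List σ) : EReal :=
  A.minValF A.init Set.univ w

/-- `(w, qu, ql)` is a recoverable gap with respect to `z`. -/
def RecGap (A : NDA σ Q) (w z : List σ) (qu ql : Q) : Prop :=
  A.minVal A.init {ql} w ≤ A.minVal A.init {qu} w ∧
  A.minVal A.init {qu} w +
      ((((A.lam : ℝ)⁻¹) ^ w.length : ℝ) : EReal) * A.minValF {qu} Set.univ z
    = A.starVal (w ++ z) ∧
  A.starVal (w ++ z) < ⊤

/-- `gap_{qu,ql}(w) = λ^{|w|}·(A_[Q₀→qu](w) − A_[Q₀→ql](w))`: the size of a gap. -/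
noncomputable def gapSize (A : NDA σ Q) (w : List σ) (qu ql : Q) : EReal :=
  (((A.lam : ℝ) ^ w.length : ℝ) : EReal) *
    (A.minVal A.init {qu} w - A.minVal A.init {ql} w)

/-- The set of sizes of recoverable gaps of `A`. -/
def gapSizes (A : NDA σ Q) : Set EReal :=
  {g | ∃ w z qu ql, A.RecGap w z qu ql ∧ g = A.gapSize w qu ql}

/-- `A` is deterministic (a DDA). -/
def Deterministic (A : NDA σ Q) : Prop :=
  (∃! q, q ∈ A.init) ∧ ∀ p s, {q | (p, s, q) ∈ A.delta}.Subsingleton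

/-- `A` is determinizable: it has an equivalent DDA over the same alphabet with
the same discounting factor. -/
def Determinizable (A : NDA σ Q) : Prop :=
  ∃ (Q' : Type) (_ : Fintype Q') (D : NDA σ Q'),
    D.Deterministic ∧ D.lam = A.lam ∧ ∀ w : List σ, A.starVal w = D.starVal w

/-- `m_A`: the maximal transition weight or final weight of `A`. -/
noncomputable def mA (A : NDA σ Q) [Fintype σ] [Fintype Q] : ℕ :=
  max ((Set.toFinite A.delta).toFinset.sup A.val)
      ((Set.toFinite A.acc).toFinset.sup A.fval)

/-- `M = 2·(λ/(λ−1))·m_A`. -/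
noncomputable def M (A : NDA σ Q) [Fintype σ] [Fintype Q] : ℚ :=
  2 * ((A.lam : ℚ) / ((A.lam : ℚ) - 1)) * (A.mA : ℚ)

/-- `Γ` of the length-`i` prefix of a run on `w`: `λ^i` times its weight. -/
def gammaPfx (A : NDA σ Q) (w : List σ) (ρ : ℕ → Q) (i : ℕ) : ℚ :=
  (A.lam : ℚ) ^ i * A.runVal (w.take i) ρ

/-- `𝒩 = λ^{|Q|²·2^{|Q|²}}·((|Q|−2)·M) + M`. -/
noncomputable def calN (A : NDA σ Q) [Fintype σ] [Fintype Q] : ℚ :=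
  (A.lam : ℚ) ^ ((Fintype.card Q) ^ 2 * 2 ^ ((Fintype.card Q) ^ 2)) *
      (((Fintype.card Q : ℚ) - 2) * A.M) + A.M

/-- `C = (λ/(λ−1))·(𝒩·|Q| + 2·m_A)`. -/
noncomputable def calC (A : NDA σ Q) [Fintype σ] [Fintype Q] : ℚ :=
  ((A.lam : ℚ) / ((A.lam : ℚ) - 1)) * (A.calN * (Fintype.card Q : ℚ) + 2 * (A.mA : ℚ))

/-- `w` has the `n`-separation property with respect to `(U, L, qu, z)`. -/
def SepPropWith (A : NDA σ Q) (n : ℚ) (w : List σ) (U L : Set Q) (qu : Q) (z : List σ) : Prop :=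
  U ∪ L = Set.univ ∧ Disjoint U L ∧ U.Nonempty ∧ L.Nonempty ∧
  (∀ qu' ∈ U, ∀ ql ∈ L,
    (((A.lam : ℝ) ^ w.length : ℝ) : EReal) *
        (A.minVal A.init {qu'} w - A.minVal A.init {ql} w) > ((n : ℝ) : EReal)) ∧
  qu ∈ U ∧ ∀ ql ∈ L, A.RecGap w z qu ql

/-- `w` has the `n`-separation property. -/
def SepProp (A : NDA σ Q) (n : ℚ) (w : List σ) : Prop :=
  ∃ U L qu z, A.SepPropWith n w U L qu z

end NDA

/-- If `val(ρ¹) ≤ val(ρ²)` then at every step `0 ≤ i ≤ n` the normalized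
gap `Γ(ρ¹₀,…,ρ¹ᵢ) − Γ(ρ²₀,…,ρ²ᵢ)` is at most `M`. -/
theorem gap_bounded_along_prefixes {σ Q : Type} [Fintype σ] [Fintype Q]
    (A : NDA σ Q) (w : List σ) (ρ1 ρ2 : ℕ → Q)
    (h1 : A.IsRun w ρ1) (h2 : A.IsRun w ρ2)
    (hval : A.runVal w ρ1 ≤ A.runVal w ρ2) :
    ∀ i ≤ w.length, A.gammaPfx w ρ1 i - A.gammaPfx w ρ2 i ≤ A.M := by
  intro i hi
  have hlam1 : (1:ℚ) < (A.lam : ℚ) := by exact_mod_cast A.one_lt_lam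
  have hlam0 : (0:ℚ) < (A.lam : ℚ) := by linarith
  set L : ℚ := (A.lam : ℚ) with hLdef
  set x : ℚ := L⁻¹ with hxdef
  have hx0 : 0 < x := inv_pos.mpr hlam0
  have hx1 : x < 1 := by
    rw [hxdef]
    exact inv_lt_one_of_one_lt₀ hlam1
  set n := w.length with hn
  set F : (ℕ → Q) → ℕ → ℚ := fun ρ j =>
    if h : j < n then x ^ j * (A.val (ρ j, w.get ⟨j, h⟩, ρ (j+1)) : ℚ) else 0 with hF
  have hFnonneg : ∀ ρ j, 0 ≤ F ρ j := by
    intro ρ j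
    by_cases h : j < n <;> simp only [hF, h, dif_pos, dif_neg, not_false_iff, le_refl] <;>
      positivity
  have hrun : ∀ ρ : ℕ → Q, A.runVal w ρ = ∑ j ∈ Finset.range n, F ρ j := by
    intro ρ
    rw [NDA.runVal, ← Fin.sum_univ_eq_sum_range (fun j => F ρ j) n]
    refine Finset.sum_congr rfl fun j _ => ?_
    have hj := j.isLt
    simp only [hF, hn, hj, dif_pos, hxdef, hLdef]
  have htake : ∀ ρ : ℕ → Q, A.runVal (w.take i) ρ = ∑ j ∈ Finset.range i, F ρ j := by
    intro ρ
    have hlen : (w.take i).length = i := by simp [List.length_take]; omega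
    rw [NDA.runVal]
    have step : ∀ j : Fin (w.take i).length,
        x ^ (j:ℕ) * (A.val (ρ (j:ℕ), (w.take i).get j, ρ ((j:ℕ)+1)) : ℚ) = F ρ (j:ℕ) := by
      intro j
      have hj : (j:ℕ) < n := by
        have h := j.isLt
        omega
      have hget : (w.take i).get j = w.get ⟨(j:ℕ), hj⟩ := by
        simp [List.getElem_take]
      simp [hF, hj, hget]
    calc ∑ j : Fin (w.take i).length,
          ((A.lam : ℚ)⁻¹) ^ (j:ℕ) * (A.val (ρ (j:ℕ), (w.take i).get j, ρ ((j:ℕ)+1)) : ℚ)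
        = ∑ j : Fin (w.take i).length, F ρ (j:ℕ) := Finset.sum_congr rfl fun j _ => step j
      _ = ∑ j ∈ Finset.range ((w.take i).length), F ρ j :=
          Fin.sum_univ_eq_sum_range (fun j => F ρ j) _
      _ = ∑ j ∈ Finset.range i, F ρ j := by rw [hlen]
  have hsplit : ∀ ρ : ℕ → Q, ∑ j ∈ Finset.range n, F ρ j
      = (∑ j ∈ Finset.range i, F ρ j) + ∑ j ∈ Finset.Ico i n, F ρ j := by
    intro ρ
    rw [Finset.range_eq_Ico, Finset.range_eq_Ico]
    exact (Finset.sum_Ico_consecutive _ (Nat.zero_le i) hi).symm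
  set P1 := ∑ j ∈ Finset.range i, F ρ1 j
  set P2 := ∑ j ∈ Finset.range i, F ρ2 j
  set T1 := ∑ j ∈ Finset.Ico i n, F ρ1 j
  set T2 := ∑ j ∈ Finset.Ico i n, F ρ2 j
  have hT1 : 0 ≤ T1 := Finset.sum_nonneg fun j _ => hFnonneg ρ1 j
  have hPdiff : P1 - P2 ≤ T2 := by
    rw [hrun ρ1, hrun ρ2, hsplit ρ1, hsplit ρ2] at hval
    linarith
  set K : ℚ := (A.mA : ℚ) with hKdef
  have hK0 : 0 ≤ K := Nat.cast_nonneg _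
  set S := ∑ j ∈ Finset.Ico i n, x ^ j with hS
  have hT2 : T2 ≤ S * K := by
    rw [hS, Finset.sum_mul]
    refine Finset.sum_le_sum fun j hj => ?_
    have hjn : j < n := (Finset.mem_Ico.mp hj).2
    have ht : (ρ2 j, w.get ⟨j, hjn⟩, ρ2 (j+1)) ∈ A.delta := h2.2 ⟨j, hjn⟩
    have hv : A.val (ρ2 j, w.get ⟨j, hjn⟩, ρ2 (j+1)) ≤ A.mA :=
      le_trans (Finset.le_sup ((Set.Finite.mem_toFinset _).mpr ht)) (le_max_left _ _)
    have hv' : (A.val (ρ2 j, w.get ⟨j, hjn⟩, ρ2 (j+1)) : ℚ) ≤ K := by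
      rw [hKdef]; exact_mod_cast hv
    simp only [hF, hjn, dif_pos]
    exact mul_le_mul_of_nonneg_left hv' (pow_nonneg hx0.le j)
  have h1x : 0 < 1 - x := by linarith
  have hsum : (1 - x) * S = x ^ i - x ^ n := by
    rw [hS, geom_sum_Ico (ne_of_lt hx1) hi]
    have hne : x - 1 ≠ 0 := sub_ne_zero.mpr (ne_of_lt hx1)
    rw [mul_div_assoc', div_eq_iff hne]
    ring
  have hSle : S ≤ x ^ i / (1 - x) := by
    rw [le_div_iff₀ h1x]
    nlinarith [pow_nonneg hx0.le n]
  have hLi : (0:ℚ) < L ^ i := pow_pos hlam0 i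
  have hLx : L ^ i * x ^ i = 1 := by
    rw [hxdef, ← mul_pow, mul_inv_cancel₀ (ne_of_gt hlam0), one_pow]
  have h1x_eq : (1:ℚ) / (1 - x) = L / (L - 1) := by
    rw [hxdef]
    rw [div_eq_div_iff (by rw [← hxdef]; linarith) (by linarith)]
    field_simp
  have hLiS : L ^ i * S ≤ L / (L - 1) := by
    calc L ^ i * S ≤ L ^ i * (x ^ i / (1 - x)) :=
          mul_le_mul_of_nonneg_left hSle hLi.le
      _ = (L ^ i * x ^ i) / (1 - x) := by ring
      _ = 1 / (1 - x) := by rw [hLx]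
      _ = L / (L - 1) := h1x_eq
  have hM : A.M = 2 * (L / (L - 1)) * K := by rw [NDA.M]
  rw [NDA.gammaPfx, NDA.gammaPfx, htake ρ1, htake ρ2, hM]
  have e1 : L ^ i * (P1 - P2) ≤ L ^ i * T2 := mul_le_mul_of_nonneg_left hPdiff hLi.le
  have e2 : L ^ i * T2 ≤ L ^ i * (S * K) := mul_le_mul_of_nonneg_left hT2 hLi.le
  have e3 : (L ^ i * S) * K ≤ (L / (L - 1)) * K := mul_le_mul_of_nonneg_right hLiS hK0
  have e4 : 0 ≤ (L / (L - 1)) * K := by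
    apply mul_nonneg _ hK0
    apply div_nonneg (by linarith) (by linarith)
  nlinarith [e1, e2, e3, e4]
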